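/- If β = b₀ + b₁i + b₂j + b₃k is a Lipschitz quaternion satisfying N(β) ≡ 4·Re(β) (mod 8), then there exist signs εᵥ ∈ {±1} with ε₀ = 1 such that the quaternion β' = b₀ + ε₁b₁i + ε₂b₂j + ε₃b₃k lies in R(1 − i − j − k). -/

import Mathlib

open Quaternion

def oneMinusIJK : ℍ[ℤ] := ⟨1, -1, -1, -1⟩

lemma construct (c₀ c₁ c₂ c₃ : ℤ)
    (h0 : (4:ℤ) ∣ c₀ - c₁ - c₂ - c₃) (h1 : (4:ℤ) ∣ c₀ + c₁ + c₂ - c₃)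
    (h2 : (4:ℤ) ∣ c₀ - c₁ + c₂ + c₃) (h3 : (4:ℤ) ∣ c₀ + c₁ - c₂ + c₃) :
    ∃ α : ℍ[ℤ], (⟨c₀, c₁, c₂, c₃⟩ : ℍ[ℤ]) = α * oneMinusIJK := by
  obtain ⟨a0, ha0⟩ := h0
  obtain ⟨a1, ha1⟩ := h1
  obtain ⟨a2, ha2⟩ := h2
  obtain ⟨a3, ha3⟩ := h3
  refine ⟨⟨a0, a1, a2, a3⟩, ?_⟩
  ext <;> simp only [oneMinusIJK] <;> erw [QuaternionAlgebra.mk_mul_mk] <;> simp <;> linarith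

lemma signs (x0 x1 x2 x3 : ZMod 8) (h : x0^2 + x1^2 + x2^2 + x3^2 = 4 * x0) :
    ∃ s1 s2 s3 : ZMod 8, (s1 = 1 ∨ s1 = -1) ∧ (s2 = 1 ∨ s2 = -1) ∧ (s3 = 1 ∨ s3 = -1) ∧
      (ZMod.castHom (show (4:ℕ) ∣ 8 by norm_num) (ZMod 4)) (x0 - s1*x1 - s2*x2 - s3*x3) = 0 ∧
      (ZMod.castHom (show (4:ℕ) ∣ 8 by norm_num) (ZMod 4)) (x0 + s1*x1 + s2*x2 - s3*x3) = 0 ∧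
      (ZMod.castHom (show (4:ℕ) ∣ 8 by norm_num) (ZMod 4)) (x0 - s1*x1 + s2*x2 + s3*x3) = 0 ∧
      (ZMod.castHom (show (4:ℕ) ∣ 8 by norm_num) (ZMod 4)) (x0 + s1*x1 - s2*x2 + s3*x3) = 0 := by
  revert h
  revert x0 x1 x2 x3
  decide

lemma lift_sign (s : ZMod 8) (hs : s = 1 ∨ s = -1) :
    ∃ ε : ℤ, (ε = 1 ∨ ε = -1) ∧ (ε : ZMod 8) = s := by
  rcases hs with rfl | rfl
  · exact ⟨1, Or.inl rfl, by push_cast; ring⟩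
  · exact ⟨-1, Or.inr rfl, by push_cast; ring⟩

theorem stmt_7 (b₀ b₁ b₂ b₃ : ℤ)
    (h : b₀^2 + b₁^2 + b₂^2 + b₃^2 ≡ 4 * b₀ [ZMOD 8]) :
    ∃ ε₁ ε₂ ε₃ : ℤ, (ε₁ = 1 ∨ ε₁ = -1) ∧ (ε₂ = 1 ∨ ε₂ = -1) ∧ (ε₃ = 1 ∨ ε₃ = -1) ∧
      ∃ α : ℍ[ℤ], (⟨b₀, ε₁ * b₁, ε₂ * b₂, ε₃ * b₃⟩ : ℍ[ℤ]) = α * oneMinusIJK := by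
  have h8 : ((b₀:ZMod 8))^2 + (b₁:ZMod 8)^2 + (b₂:ZMod 8)^2 + (b₃:ZMod 8)^2
      = 4 * (b₀:ZMod 8) := by
    have := (ZMod.intCast_eq_intCast_iff _ _ 8).mpr h
    push_cast at this
    convert this using 1 <;> push_cast <;> ring
  obtain ⟨s1, s2, s3, hs1, hs2, hs3, d0, d1, d2, d3⟩ := signs _ _ _ _ h8
  obtain ⟨ε₁, he1, hc1⟩ := lift_sign s1 hs1
  obtain ⟨ε₂, he2, hc2⟩ := lift_sign s2 hs2
  obtain ⟨ε₃, he3, hc3⟩ := lift_sign s3 hs3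
  refine ⟨ε₁, ε₂, ε₃, he1, he2, he3, ?_⟩
  have key : ∀ x : ℤ, (ZMod.castHom (show (4:ℕ) ∣ 8 by norm_num) (ZMod 4)) ((x : ZMod 8))
      = (x : ZMod 4) := fun x => map_intCast _ x
  rw [← hc1, ← hc2, ← hc3] at d0 d1 d2 d3
  apply construct (b₀) (ε₁ * b₁) (ε₂ * b₂) (ε₃ * b₃)
  · rw [show (4:ℤ) = ((4:ℕ):ℤ) by norm_num, ← ZMod.intCast_zmod_eq_zero_iff_dvd, ← key]; convert d0 using 2; push_cast; ring
  · rw [show (4:ℤ) = ((4:ℕ):ℤ) by norm_num, ← ZMod.intCast_zmod_eq_zero_iff_dvd, ← key]; convert d1 using 2; push_cast; ring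
  · rw [show (4:ℤ) = ((4:ℕ):ℤ) by norm_num, ← ZMod.intCast_zmod_eq_zero_iff_dvd, ← key]; convert d2 using 2; push_cast; ring
  · rw [show (4:ℤ) = ((4:ℕ):ℤ) by norm_num, ← ZMod.intCast_zmod_eq_zero_iff_dvd, ← key]; convert d3 using 2; push_cast; ring
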